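/- The collection Σ of covtree certificate sets together with the empty set is a semi-ring of subsets of Ω: it contains ∅, is closed under pairwise intersection (the intersection of two certificate sets is either one of them or empty), and the difference cert(Γₙ) ∖ cert(Γₘ), when cert(Γₘ) ⊆ cert(Γₙ), is a finite disjoint union of certificate sets. -/

import Mathlib

/-- A finite labeled order: a partial order structure on `Fin n`. -/
abbrev FinOrd (n : ℕ) := PartialOrder (Fin n)

/-- Isomorphism of two orders on `Fin n`. -/
def OrdIso {n : ℕ} (p q : FinOrd n) : Prop :=
  Nonempty (p.le ≃r q.le)

instance ordSetoid (n : ℕ) : Setoid (FinOrd n) where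
  r := OrdIso
  iseqv := by
    refine ⟨fun p => ⟨RelIso.refl _⟩, ?_, ?_⟩
    · rintro p q ⟨e⟩; exact ⟨e.symm⟩
    · rintro p q r ⟨e⟩ ⟨f⟩; exact ⟨e.trans f⟩

/-- An `n`-order: an isomorphism class of partial orders of cardinality `n`. -/
def NOrder (n : ℕ) := Quotient (ordSetoid n)

/-- `B` (a partial order on `Fin n`) occurs as a stem (finite downward-closed
subcauset) in the partial order `p` on `α`. -/
def StemIn {n : ℕ} {α : Type*} (B : FinOrd n) (p : PartialOrder α) : Prop :=
  ∃ f : Fin n → α, Function.Injective f ∧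
    (∀ i j : Fin n, B.le i j ↔ p.le (f i) (f j)) ∧
    (∀ (i : Fin n) (y : α), p.lt y (f i) → ∃ j : Fin n, f j = y)

/-- The `n`-order `B` is a stem in the order `p`. -/
def QStemIn {n : ℕ} {α : Type*} (B : NOrder n) (p : PartialOrder α) : Prop :=
  ∃ b : FinOrd n, ⟦b⟧ = B ∧ StemIn b p

/-- The set of `k`-stems of `p`, as a set of `k`-orders. -/
def stems (k : ℕ) {α : Type*} (p : PartialOrder α) : Set (NOrder k) :=
  {B | QStemIn B p}

/-- Stem relation between unlabeled finite orders: `S` is a stem in `T`. -/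
def NStemIn {n m : ℕ} (S : NOrder n) (T : NOrder m) : Prop :=
  ∃ t : FinOrd m, ⟦t⟧ = T ∧ QStemIn S t

/-- An order is past-finite if every element has finitely many elements below it. -/
def PastFinite {α : Type*} (p : PartialOrder α) : Prop :=
  ∀ x : α, {y : α | p.lt y x}.Finite

/-- The operation sending a set of `n`-orders to the set of `(n-1)`-stems of its
elements. -/
def Ominus (n : ℕ) (Γ : Set (NOrder n)) : Set (NOrder (n - 1)) :=
  {B | ∃ A ∈ Γ, NStemIn B A}

/-- The `j`-fold iterate of `Ominus`. -/
def OminusIter : (j : ℕ) → (n : ℕ) → Set (NOrder n) → Set (NOrder (n - j))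
  | 0, _, Γ => Γ
  | j + 1, n, Γ => Ominus (n - j) (OminusIter j n Γ)

/-- `Γ` is a node of covtree at level `n`: it is nonempty and has a certificate,
i.e. a (finite or countably infinite) past-finite order whose set of `n`-stems
is exactly `Γ`. -/
def IsNode (n : ℕ) (Γ : Set (NOrder n)) : Prop :=
  Γ.Nonempty ∧ ∃ (α : Type) (p : PartialOrder α), Countable α ∧ PastFinite p ∧
    stems n p = Γ


/-- An infinite path in covtree, starting at the root: for each `n` a node of
covtree at level `n` (a nonempty set of `n`-orders admitting a certificate),
each node being directly below the next via the `O₋` operation.  (Level `0`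
carries the trivial node consisting of the empty order.) -/
structure CovPath where
  node : (n : ℕ) → Set (NOrder n)
  nonempty : ∀ n, (node n).Nonempty
  isNode : ∀ n, IsNode n (node n)
  link : ∀ n, Ominus (n + 1) (node (n + 1)) = node n

/-- A naturally labeled infinite causet: a partial order on `ℕ` in which
`i ≺ j` implies `i < j` (hence past-finite). -/
def NatCauset := {p : PartialOrder ℕ // ∀ i j : ℕ, p.lt i j → i < j}

instance natSetoid : Setoid NatCauset where
  r p q := Nonempty (p.val.le ≃r q.val.le)
  iseqv := by
    refine ⟨fun p => ⟨RelIso.refl _⟩, ?_, ?_⟩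
    · rintro p q ⟨e⟩; exact ⟨e.symm⟩
    · rintro p q r ⟨e⟩ ⟨f⟩; exact ⟨e.trans f⟩

/-- The space `Ω` of infinite orders: isomorphism classes of countable
past-finite infinite causets. -/
def InfOrd := Quotient natSetoid

/-- The set of `n`-stems of an infinite order. -/
def Nstems (n : ℕ) (C : InfOrd) : Set (NOrder n) :=
  {B | ∃ c : NatCauset, ⟦c⟧ = C ∧ QStemIn B c.val}

/-- The stem set of an `n`-order `B`: the set of infinite orders containing `B`
as a stem. -/
def stemSet {n : ℕ} (B : NOrder n) : Set InfOrd :=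
  {C | B ∈ Nstems n C}

/-- The certificate set of a set `Γ` of `n`-orders: the set of infinite orders
whose set of `n`-stems is exactly `Γ`. -/
def certSet {n : ℕ} (Γ : Set (NOrder n)) : Set InfOrd :=
  {C | Nstems n C = Γ}

/-- The rogue equivalence relation: two infinite orders are equivalent iff they
have the same `n`-stems for every `n`. -/
instance rogueSetoid : Setoid InfOrd where
  r A B := ∀ n, Nstems n A = Nstems n B
  iseqv := by
    refine ⟨fun A n => rfl, ?_, ?_⟩
    · intro A B h n; exact (h n).symm
    · intro A B C h h' n; exact (h n).trans (h' n)

/-- The quotient `Ω/∼_R` of infinite orders by the rogue equivalence. -/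
def RQuot := Quotient rogueSetoid

open scoped Classical in
/-- The distance between two infinite orders: `2⁻ⁿ` where `n` is the largest
integer such that the two orders have the same set of `n`-stems, and `0` if
they have the same stems of every cardinality. -/
noncomputable def preDist (A B : InfOrd) : ℝ :=
  if ∀ n, Nstems n A = Nstems n B then 0
  else (2 : ℝ)⁻¹ ^ sSup {k : ℕ | Nstems k A = Nstems k B}

/-- The induced metric on the quotient `Ω/∼_R`. -/
noncomputable def rdist : RQuot → RQuot → ℝ :=
  Quotient.lift₂ preDist (by
    intro a b a' b' ha hb
    have h : ∀ k, (Nstems k a = Nstems k b) ↔ (Nstems k a' = Nstems k b') := by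
      intro k; rw [ha k, hb k]
    unfold preDist
    by_cases hall : ∀ n, Nstems n a = Nstems n b
    · rw [if_pos hall, if_pos (fun n => (h n).mp (hall n))]
    · rw [if_neg hall, if_neg (fun hc => hall (fun n => (h n).mpr (hc n)))]
      congr 1
      apply congrArg
      ext k
      exact h k)

/-- The image of a certificate set in the quotient `Ω/∼_R`. -/
def certR {n : ℕ} (Γ : Set (NOrder n)) : Set RQuot :=
  (fun C : InfOrd => (⟦C⟧ : RQuot)) '' certSet Γ

/-- The diameter of a subset of `Ω/∼_R`: the supremum of distances between its
points. -/
noncomputable def rdiam (S : Set RQuot) : ℝ :=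
  sSup {r : ℝ | ∃ x ∈ S, ∃ y ∈ S, rdist x y = r}


/-- The collection `Σ` of covtree certificate sets, together with `∅`. -/
def SigmaColl : Set (Set InfOrd) :=
  {s | s = ∅ ∨ ∃ (n : ℕ) (Γ : Set (NOrder n)), IsNode n Γ ∧ s = certSet Γ}

section SemiringAux

open Function

/-- Unfolded characterization of `lt` for a bare partial order structure. -/
lemma po_lt_iff {β : Type*} (q : PartialOrder β) (a b : β) :
    q.lt a b ↔ q.le a b ∧ ¬ q.le b a :=
  q.lt_iff_le_not_ge a b

lemma stemIn_self {n : ℕ} (b : FinOrd n) : StemIn b b :=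
  ⟨id, injective_id, fun _ _ => Iff.rfl, fun _ y _ => ⟨y, rfl⟩⟩

lemma stemIn_trans {n m : ℕ} {α : Type*} {b : FinOrd n} {t : FinOrd m}
    {p : PartialOrder α} (h1 : StemIn b t) (h2 : StemIn t p) : StemIn b p := by
  obtain ⟨f, hf, hfo, hfd⟩ := h1
  obtain ⟨g, hg, hgo, hgd⟩ := h2
  refine ⟨g ∘ f, hg.comp hf, fun i j => (hfo i j).trans (hgo (f i) (f j)), ?_⟩
  intro i y hy
  obtain ⟨j, hj⟩ := hgd (f i) y hy
  subst hj
  have hlt : t.lt j (f i) := by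
    rw [po_lt_iff]
    rw [po_lt_iff] at hy
    exact ⟨(hgo _ _).mpr hy.1, fun hc => hy.2 ((hgo _ _).mp hc)⟩
  obtain ⟨k, hk⟩ := hfd i j hlt
  exact ⟨k, congrArg g hk⟩

lemma stemIn_congr {n : ℕ} {α β : Type*} {p : PartialOrder α} {q : PartialOrder β}
    (e : p.le ≃r q.le) {b : FinOrd n} (h : StemIn b p) : StemIn b q := by
  obtain ⟨f, hf, hfo, hfd⟩ := h
  refine ⟨fun i => e (f i), fun i j hij => hf (e.injective hij),
    fun i j => (hfo i j).trans e.map_rel_iff.symm, ?_⟩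
  intro i y hy
  rw [po_lt_iff] at hy
  have h2 : p.lt (e.symm y) (f i) := by
    rw [po_lt_iff]
    constructor
    · exact e.map_rel_iff.mp (by simpa using hy.1)
    · intro hc
      exact hy.2 (by simpa using e.map_rel_iff.mpr hc)
  obtain ⟨j, hj⟩ := hfd i _ h2
  exact ⟨j, by show e (f j) = y; rw [hj]; simp⟩

lemma nstems_rep {n : ℕ} (c : NatCauset) : Nstems n ⟦c⟧ = stems n c.val := by
  ext B
  constructor
  · rintro ⟨c', hc', b, hb, hs⟩
    obtain ⟨e⟩ := Quotient.exact hc'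
    exact ⟨b, hb, stemIn_congr e hs⟩
  · rintro ⟨b, hb, hs⟩
    exact ⟨c, rfl, b, hb, hs⟩

open scoped Classical in
lemma stemIn_extend {n : ℕ} (c : NatCauset) (b : FinOrd n) (h : StemIn b c.val) :
    ∃ b' : FinOrd (n + 1), StemIn b' c.val ∧ StemIn b b' := by
  obtain ⟨f, hf, hfo, hfd⟩ := h
  have hex : ∃ k : ℕ, ∀ i, f i ≠ k := by
    obtain ⟨k, hk⟩ := (Set.finite_range f).infinite_compl.nonempty
    exact ⟨k, fun i hi => hk ⟨i, hi⟩⟩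
  set x := Nat.find hex with hxdef
  have hx : ∀ i, f i ≠ x := Nat.find_spec hex
  have hmin : ∀ y, y < x → ∃ i, f i = y := by
    intro y hy
    by_contra hc
    push_neg at hc
    exact absurd hy (not_lt.mpr (Nat.find_le hc))
  set f' : Fin (n + 1) → ℕ := Fin.snoc f x with hf'def
  have hcast : ∀ i : Fin n, f' i.castSucc = f i := by
    intro i; rw [hf'def]; simp
  have hlast : f' (Fin.last n) = x := by rw [hf'def]; simp
  have hinj : Function.Injective f' := by
    intro i j hij
    rcases Fin.eq_castSucc_or_eq_last i with ⟨i', rfl⟩ | rfl <;>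
      rcases Fin.eq_castSucc_or_eq_last j with ⟨j', rfl⟩ | rfl
    · rw [hcast, hcast] at hij; exact congrArg _ (hf hij)
    · rw [hcast, hlast] at hij; exact absurd hij (hx i')
    · rw [hcast, hlast] at hij; exact absurd hij.symm (hx j')
    · rfl
  refine ⟨@PartialOrder.lift (Fin (n + 1)) ℕ c.val f' hinj, ⟨f', hinj,
    fun i j => Iff.rfl, ?_⟩, ?_⟩
  · intro i y hy
    rcases Fin.eq_castSucc_or_eq_last i with ⟨i', rfl⟩ | rfl
    · rw [hcast] at hy
      obtain ⟨j, hj⟩ := hfd i' y hy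
      exact ⟨j.castSucc, by rw [hcast, hj]⟩
    · rw [hlast] at hy
      obtain ⟨j, hj⟩ := hmin y (c.2 y x hy)
      exact ⟨j.castSucc, by rw [hcast, hj]⟩
  · refine ⟨Fin.castSucc, Fin.castSucc_injective n, ?_, ?_⟩
    · intro i j
      show b.le i j ↔ c.val.le (f' i.castSucc) (f' j.castSucc)
      rw [hcast, hcast]; exact hfo i j
    · intro i y hy
      have hy' : c.val.lt (f' y) (f' i.castSucc) := hy
      rw [hcast] at hy'
      obtain ⟨j, hj⟩ := hfd i (f' y) hy'
      exact ⟨j, hinj (by rw [hcast]; exact hj)⟩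

lemma stemIn_of_le {c : NatCauset} {n m : ℕ} (h : n ≤ m) (b : FinOrd n)
    (hb : StemIn b c.val) : ∃ a : FinOrd m, StemIn a c.val ∧ StemIn b a := by
  induction h with
  | refl => exact ⟨b, hb, stemIn_self b⟩
  | step h ih =>
    obtain ⟨a, ha, hba⟩ := ih
    obtain ⟨a', ha', haa'⟩ := stemIn_extend c a ha
    exact ⟨a', ha', stemIn_trans hba haa'⟩

lemma exists_stem (c : NatCauset) (n : ℕ) : ∃ a : FinOrd n, StemIn a c.val := by
  have h0 : StemIn (inferInstance : FinOrd 0) c.val :=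
    ⟨Fin.elim0, fun i => i.elim0, fun i => i.elim0, fun i => i.elim0⟩
  obtain ⟨a, ha, _⟩ := stemIn_of_le (Nat.zero_le n) _ h0
  exact ⟨a, ha⟩

lemma pastFinite_natCauset (c : NatCauset) : PastFinite c.val := fun x =>
  (Set.finite_Iio x).subset fun y hy => c.2 y x hy

lemma isNode_nstems (n : ℕ) (C : InfOrd) : IsNode n (Nstems n C) := by
  obtain ⟨c, rfl⟩ := Quotient.exists_rep C
  rw [nstems_rep]
  obtain ⟨a, ha⟩ := exists_stem c n
  exact ⟨⟨⟦a⟧, a, rfl, ha⟩, ℕ, c.val, inferInstance, pastFinite_natCauset c, rfl⟩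

lemma nstems_eq {n m : ℕ} (h : n ≤ m) (C : InfOrd) :
    Nstems n C = {B | ∃ A ∈ Nstems m C, NStemIn B A} := by
  obtain ⟨c, rfl⟩ := Quotient.exists_rep C
  ext B
  simp only [nstems_rep, Set.mem_setOf_eq]
  constructor
  · rintro ⟨b, hb, hsb⟩
    obtain ⟨a, ha, hba⟩ := stemIn_of_le h b hsb
    exact ⟨⟦a⟧, ⟨a, rfl, ha⟩, a, rfl, b, hb, hba⟩
  · rintro ⟨A, ⟨a, ha, hsa⟩, t, hT, b, hb, hbt⟩
    obtain ⟨e⟩ := Quotient.exact (hT.trans ha.symm)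
    exact ⟨b, hb, stemIn_trans (stemIn_congr e hbt) hsa⟩

lemma nstems_determined {n m : ℕ} (h : n ≤ m) {C C' : InfOrd}
    (hm : Nstems m C = Nstems m C') : Nstems n C = Nstems n C' := by
  rw [nstems_eq h C, nstems_eq h C', hm]

instance finordFinite (n : ℕ) : Finite (FinOrd n) := by
  have hinj : Function.Injective (fun p : FinOrd n => p.le) := by
    intro p q hpq
    exact PartialOrder.ext fun a b => iff_of_eq (congrFun (congrFun hpq a) b)
  exact Finite.of_injective _ hinj

instance norderFinite (n : ℕ) : Finite (NOrder n) := Quotient.finite (ordSetoid n)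

end SemiringAux

/-- The collection `Σ` of covtree certificate sets together
with the empty set is a semi-ring of subsets of `Ω`: it contains `∅`, is closed
under pairwise intersection (indeed the intersection of two certificate sets is
one of them or empty), and the difference of nested members is a finite
disjoint union of members. -/
theorem sigmaColl_isSemiring :
    (∅ : Set InfOrd) ∈ SigmaColl ∧
    (∀ s ∈ SigmaColl, ∀ t ∈ SigmaColl, s ∩ t ∈ SigmaColl) ∧
    (∀ (n m : ℕ) (Γn : Set (NOrder n)) (Γm : Set (NOrder m)),
      IsNode n Γn → IsNode m Γm →
      certSet Γn ∩ certSet Γm = certSet Γn ∨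
      certSet Γn ∩ certSet Γm = certSet Γm ∨
      certSet Γn ∩ certSet Γm = ∅) ∧
    (∀ s ∈ SigmaColl, ∀ t ∈ SigmaColl, s ⊆ t →
      ∃ F : Finset (Set InfOrd), (F : Set (Set InfOrd)) ⊆ SigmaColl ∧
        (F : Set (Set InfOrd)).PairwiseDisjoint id ∧
        t \ s = ⋃₀ (F : Set (Set InfOrd))) := by
  have hmemE : (∅ : Set InfOrd) ∈ SigmaColl := Or.inl rfl
  have tri : ∀ (n m : ℕ) (Γn : Set (NOrder n)) (Γm : Set (NOrder m)),
      certSet Γn ∩ certSet Γm = certSet Γn ∨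
      certSet Γn ∩ certSet Γm = certSet Γm ∨
      certSet Γn ∩ certSet Γm = ∅ := by
    intro n m Γn Γm
    by_cases hE : certSet Γn ∩ certSet Γm = ∅
    · exact Or.inr (Or.inr hE)
    obtain ⟨C, hCn, hCm⟩ := Set.nonempty_iff_ne_empty.mpr hE
    have hCn' : Nstems n C = Γn := hCn
    have hCm' : Nstems m C = Γm := hCm
    rcases le_total n m with h | h
    · refine Or.inr (Or.inl (subset_antisymm Set.inter_subset_right
        fun C' hC' => ⟨?_, hC'⟩))
      have hC'' : Nstems m C' = Γm := hC'
      show Nstems n C' = Γn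
      rw [← hCn']
      exact nstems_determined h (hC''.trans hCm'.symm)
    · refine Or.inl (subset_antisymm Set.inter_subset_left
        fun C' hC' => ⟨hC', ?_⟩)
      have hC'' : Nstems n C' = Γn := hC'
      show Nstems m C' = Γm
      rw [← hCm']
      exact nstems_determined h (hC''.trans hCn'.symm)
  have hinter : ∀ s ∈ SigmaColl, ∀ t ∈ SigmaColl, s ∩ t ∈ SigmaColl := by
    rintro s hs t ht
    rcases hs with rfl | ⟨n, Γn, hn, rfl⟩
    · rw [Set.empty_inter]; exact hmemE
    rcases ht with rfl | ⟨m, Γm, hm, rfl⟩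
    · rw [Set.inter_empty]; exact hmemE
    rcases tri n m Γn Γm with h | h | h
    · rw [h]; exact Or.inr ⟨n, Γn, hn, rfl⟩
    · rw [h]; exact Or.inr ⟨m, Γm, hm, rfl⟩
    · rw [h]; exact hmemE
  refine ⟨hmemE, hinter, fun n m Γn Γm _ _ => tri n m Γn Γm, ?_⟩
  rintro s hs t ht hsub
  by_cases hse : s = ∅
  · subst hse
    refine ⟨{t}, ?_, ?_, ?_⟩
    · rw [Finset.coe_singleton]; exact Set.singleton_subset_iff.mpr ht
    · rw [Finset.coe_singleton]; exact Set.pairwiseDisjoint_singleton t id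
    · rw [Finset.coe_singleton, Set.sUnion_singleton, Set.diff_empty]
  obtain ⟨C₀, hC₀⟩ := Set.nonempty_iff_ne_empty.mpr hse
  rcases hs with rfl | ⟨m, Γm, hm, rfl⟩
  · exact absurd rfl hse
  rcases ht with rfl | ⟨n, Γn, hn, rfl⟩
  · exact absurd (Set.subset_empty_iff.mp hsub) hse
  have hC₀m : Nstems m C₀ = Γm := hC₀
  have hC₀n : Nstems n C₀ = Γn := hsub hC₀
  rcases le_total m n with h | h
  · have hts : certSet Γn ⊆ certSet Γm := by
      intro C hC
      have hC' : Nstems n C = Γn := hC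
      show Nstems m C = Γm
      rw [← hC₀m]
      exact nstems_determined h (hC'.trans hC₀n.symm)
    refine ⟨∅, by simp, by simp, ?_⟩
    rw [Finset.coe_empty, Set.sUnion_empty]
    exact Set.diff_eq_empty.mpr hts
  · haveI : Finite (Set (NOrder m)) := inferInstanceAs (Finite (NOrder m → Prop))
    set S : Set (Set InfOrd) :=
      (fun C : InfOrd => certSet (Nstems m C)) '' (certSet Γn \ certSet Γm) with hSdef
    have hSfin : S.Finite := by
      refine Set.Finite.subset (Set.finite_range
        (fun Γ : Set (NOrder m) => certSet Γ)) ?_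
      rintro u ⟨C, _, rfl⟩
      exact ⟨Nstems m C, rfl⟩
    refine ⟨hSfin.toFinset, ?_, ?_, ?_⟩
    · rw [Set.Finite.coe_toFinset]
      rintro u ⟨C, hC, rfl⟩
      exact Or.inr ⟨m, Nstems m C, isNode_nstems m C, rfl⟩
    · rw [Set.Finite.coe_toFinset]
      rintro u hu v hv huv
      obtain ⟨C, _, rfl⟩ := hu
      obtain ⟨C', _, rfl⟩ := hv
      simp only [Function.onFun, id_eq]
      rw [Set.disjoint_left]
      intro D hD hD'
      have h1 : Nstems m D = Nstems m C := hD
      have h2 : Nstems m D = Nstems m C' := hD'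
      exact huv (congrArg certSet (h1.symm.trans h2))
    · rw [Set.Finite.coe_toFinset]
      ext D
      constructor
      · intro hD
        exact ⟨certSet (Nstems m D), ⟨D, hD, rfl⟩, rfl⟩
      · rintro ⟨u, ⟨C, hC, rfl⟩, hD⟩
        have hDm : Nstems m D = Nstems m C := hD
        obtain ⟨hCt, hCs⟩ := hC
        have hCt' : Nstems n C = Γn := hCt
        constructor
        · show Nstems n D = Γn
          rw [← hCt']
          exact nstems_determined h hDm
        · intro hDs
          apply hCs
          have hDs' : Nstems m D = Γm := hDs
          show Nstems m C = Γm
          rw [← hDm]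
          exact hDs'
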